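/- arXiv:2509.04070 — 5 statements merged into one kernel-verified Lean document; each statement's English description precedes it below -/
import Mathlib

section
/- Let α, β be natural numbers, i ≠ j positions, α_swapped the number obtained from α by swapping bits i and j, δ = bit_i(α) - bit_j(α) (as an integer), and Δ = δ · (2^i - 2^j). Then α_swapped · β + Δ · β = α · β. -/
/-- The k-th binary digit of a natural number, as an integer 0 or 1. -/
def bit (k α : ℕ) : ℤ := if α.testBit k then 1 else 0

/-- The number obtained from `α` by exchanging the binary digits at positions `i` and `j`. -/
def swapBits (i j α : ℕ) : ℕ :=
  if α.testBit i = α.testBit j then α else α ^^^ (2 ^ i ^^^ 2 ^ j)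

lemma xor_two_pow_int (i : ℕ) : ∀ α : ℕ, ((α ^^^ 2 ^ i : ℕ) : ℤ) =
    α + (if α.testBit i then -(2 ^ i) else 2 ^ i) := by
  induction i with
  | zero =>
    intro α
    obtain ⟨b, m, rfl⟩ : ∃ b m, Nat.bit b m = α := ⟨_, _, Nat.bit_testBit_zero_shiftRight_one α⟩
    have : (2:ℕ)^0 = Nat.bit true 0 := rfl
    rw [this, Nat.xor_bit, Nat.testBit_bit_zero]
    cases b <;> simp [Nat.bit_val]
  | succ i ih =>
    intro α
    obtain ⟨b, m, rfl⟩ : ∃ b m, Nat.bit b m = α := ⟨_, _, Nat.bit_testBit_zero_shiftRight_one α⟩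
    have h2 : (2:ℕ)^(i+1) = Nat.bit false (2^i) := by simp [Nat.bit_val]; ring
    rw [h2, Nat.xor_bit, Nat.testBit_bit_succ]
    have := ih m
    cases b <;> simp only [Nat.bit_val, Bool.bne_false, Bool.toNat] <;>
      by_cases h : m.testBit i <;>
      simp only [h, if_true, if_false, eq_self_iff_true] at this ⊢ <;> push_cast <;>
      rw [this] <;> push_cast <;> ring

theorem reswo_correct (α β i j : ℕ) (hij : i ≠ j) :
    (swapBits i j α : ℤ) * β + (bit i α - bit j α) * (2 ^ i - 2 ^ j) * β = (α : ℤ) * β := by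
  unfold swapBits bit
  by_cases h : α.testBit i = α.testBit j
  · simp [h]
  · rw [if_neg h, ← Nat.xor_assoc]
    have hj : (α ^^^ 2 ^ i).testBit j = α.testBit j := by
      simp [Nat.testBit_xor, Nat.testBit_two_pow_of_ne hij]
    have e1 := xor_two_pow_int j (α ^^^ 2 ^ i)
    have e2 := xor_two_pow_int i α
    rw [hj] at e1
    rw [e1, e2]
    cases hi : α.testBit i <;> cases hjv : α.testBit j <;>
      simp [hi, hjv] at h ⊢ <;> ring
end

section
/- Let q ≥ 2, k natural numbers with q < 2^k, μ = ⌊2^(2k)/q⌋, and c a natural number with c < 2^(2k). Then the Barrett quotient estimate satisfies ⌊c/q⌋ - 2 ≤ ⌊c·μ/2^(2k)⌋ ≤ ⌊c/q⌋. -/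
theorem barrett_quotient_bounds (q k c : ℕ) (hq : 2 ≤ q) (hqk : q < 2 ^ k)
    (hc : c < 2 ^ (2 * k)) :
    ((c / q : ℕ) : ℤ) - 2 ≤ ((c * (2 ^ (2 * k) / q)) / 2 ^ (2 * k) : ℕ) ∧
      (c * (2 ^ (2 * k) / q)) / 2 ^ (2 * k) ≤ c / q := by
  have hq0 : 0 < q := by omega
  set N := 2 ^ (2 * k) with hN
  have hNpos : 0 < N := Nat.pow_pos (by norm_num)
  have hqZ : (0 : ℤ) < q := by exact_mod_cast hq0
  have hNZ : (0 : ℤ) < N := by exact_mod_cast hNpos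
  constructor
  · -- lower bound
    have h2 := Int.mul_ediv_add_emod (N : ℤ) q
    have h3 := Int.mul_ediv_add_emod (c : ℤ) q
    have h1 : (N : ℤ) % q < q := Int.emod_lt_of_pos _ hqZ
    have h1' : (0 : ℤ) ≤ (N : ℤ) % q := Int.emod_nonneg _ (by positivity)
    have h3' : (0 : ℤ) ≤ (c : ℤ) % q := Int.emod_nonneg _ (by positivity)
    have hcN : (c : ℤ) < N := by exact_mod_cast hc
    have ht0 : (0 : ℤ) ≤ (c : ℤ) / q := Int.ediv_nonneg (by positivity) (by positivity)
    have hμ0 : (0 : ℤ) ≤ (N : ℤ) / q := Int.ediv_nonneg (by positivity) (by positivity)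
    have key : ((c : ℤ) / q - 2) * N ≤ (c : ℤ) * ((N : ℤ) / q) := by
      nlinarith [mul_le_mul_of_nonneg_right
          (show (q : ℤ) * ((c : ℤ) / q) ≤ c by linarith) hμ0,
        mul_le_mul_of_nonneg_left
          (show (N : ℤ) - q ≤ q * ((N : ℤ) / q) by linarith) ht0]
    have hfinal : ((c : ℤ) / q) - 2 ≤ ((c : ℤ) * ((N : ℤ) / q)) / N := by
      rw [Int.le_ediv_iff_mul_le hNZ]
      linarith
    push_cast
    exact hfinal
  · -- upper bound
    calc c * (N / q) / N ≤ c * N / q / N :=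
          Nat.div_le_div_right (Nat.mul_div_le_mul_div_assoc _ _ _)
      _ = c * N / (q * N) := Nat.div_div_eq_div_mul _ _ _
      _ = c * N / (N * q) := by rw [Nat.mul_comm q N]
      _ = c / q := by rw [← Nat.div_div_eq_div_mul, Nat.mul_div_cancel _ hNpos]
end

section
/- Let q ≥ 2, k natural with q < 2^k, μ = ⌊2^(2k)/q⌋, and c < 2^(2k). Then the Barrett remainder r = c - ⌊c·μ/2^(2k)⌋·q satisfies 0 ≤ r < 3q. -/
theorem barrett_remainder_bounds (q k c : ℕ) (hq : 2 ≤ q) (hqk : q < 2 ^ k)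
    (hc : c < 2 ^ (2 * k)) :
    0 ≤ (c : ℤ) - ((c * (2 ^ (2 * k) / q)) / 2 ^ (2 * k) : ℕ) * q ∧
      (c : ℤ) - ((c * (2 ^ (2 * k) / q)) / 2 ^ (2 * k) : ℕ) * q < 3 * q := by
  set N := 2 ^ (2 * k) with hNdef
  set μ := N / q with hμdef
  set m := c * μ / N with hmdef
  have hN0 : 0 < N := pow_pos (by norm_num) _
  have hq0 : 0 < q := by omega
  have h1 : m * q ≤ c := by
    have a : m * N ≤ c * μ := Nat.div_mul_le_self _ _
    have b : μ * q ≤ N := Nat.div_mul_le_self _ _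
    have key : m * q * N ≤ c * N := by
      calc m * q * N = (m * N) * q := by ring
        _ ≤ (c * μ) * q := Nat.mul_le_mul_right _ a
        _ = c * (μ * q) := by ring
        _ ≤ c * N := Nat.mul_le_mul_left _ b
    exact Nat.le_of_mul_le_mul_right key hN0
  have e1 : c * μ < (m + 1) * N := (Nat.div_lt_iff_lt_mul hN0).mp (Nat.lt_succ_self m)
  have e2 : N < (μ + 1) * q := (Nat.div_lt_iff_lt_mul hq0).mp (Nat.lt_succ_self μ)
  have h2 : c < m * q + 3 * q := by
    have key : N * c < (m * q + 3 * q) * N := by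
      calc N * c ≤ ((μ + 1) * q) * c := Nat.mul_le_mul_right _ (le_of_lt e2)
        _ = q * (c * μ) + q * c := by ring
        _ < q * ((m + 1) * N) + q * N := by
            exact Nat.add_lt_add ((Nat.mul_lt_mul_left hq0).mpr e1) ((Nat.mul_lt_mul_left hq0).mpr hc)
        _ = (m * q + 2 * q) * N := by ring
        _ ≤ (m * q + 3 * q) * N := Nat.mul_le_mul_right _ (by omega)
    have key2 : c * N < (m * q + 3 * q) * N := by
      calc c * N = N * c := by ring
        _ < (m * q + 3 * q) * N := key
    exact Nat.lt_of_mul_lt_mul_right key2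
  constructor
  · have : ((m * q : ℕ) : ℤ) ≤ (c : ℤ) := by exact_mod_cast h1
    push_cast at this ⊢
    linarith
  · have : (c : ℤ) < ((m * q + 3 * q : ℕ) : ℤ) := by exact_mod_cast h2
    push_cast at this ⊢
    linarith
end

section
/- Let q ≥ 2 and suppose Σ over all word pairs of the per-word Barrett residues, each reduced into [0, q) and accumulated with conditional subtraction (if the running sum ρ exceeds q, subtract q; the accumulation adds (l/w)² terms each < q), yields a value ρ congruent to α · β modulo q. -/
/-- One accumulation step of MBRFD: add a residue and conditionally subtract `q`. -/
def mbrfdStep (q ρ r : ℕ) : ℕ := if q ≤ ρ + r then ρ + r - q else ρ + r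

private lemma mbrfdStep_mod (q a r : ℕ) : mbrfdStep q a r % q = (a + r) % q := by
  unfold mbrfdStep
  split
  · exact (Nat.mod_eq_sub_mod ‹_›).symm
  · rfl

private lemma foldl_mbrfd_mod (q : ℕ) :
    ∀ (L : List ℕ) (a : ℕ), (L.foldl (mbrfdStep q) a) % q = (a + L.sum) % q := by
  intro L
  induction L with
  | nil => simp
  | cons x xs ih =>
    intro a
    simp only [List.foldl_cons, List.sum_cons]
    rw [ih, Nat.add_mod, mbrfdStep_mod, ← Nat.add_mod, Nat.add_assoc]

private lemma digit_sum (w x : ℕ) :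
    ∀ n, ∑ i ∈ Finset.range n, (x / 2 ^ (i * w) % 2 ^ w) * 2 ^ (i * w) = x % 2 ^ (n * w) := by
  intro n
  induction n with
  | zero => simp [Nat.mod_one]
  | succ n ih =>
    rw [Finset.sum_range_succ, ih]
    have h : (2 : ℕ) ^ ((n + 1) * w) = 2 ^ (n * w) * 2 ^ w := by
      rw [← pow_add, Nat.succ_mul]
    rw [h, Nat.mod_mul]
    ring

theorem mbrfd_accumulator_correct (l w α β q : ℕ) (hq : 2 ≤ q) (hwl : w ∣ l)
    (hα : α < 2 ^ l) (hβ : β < 2 ^ l) :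
    (((List.range (l / w)).flatMap (fun i =>
        (List.range (l / w)).map (fun j =>
          ((α / 2 ^ (i * w) % 2 ^ w) * (β / 2 ^ (j * w) % 2 ^ w) * 2 ^ ((i + j) * w)) % q))).foldl
      (mbrfdStep q) 0) % q = (α * β) % q := by
  set n := l / w with hn
  set t : ℕ → ℕ → ℕ := fun i j =>
    (α / 2 ^ (i * w) % 2 ^ w) * (β / 2 ^ (j * w) % 2 ^ w) * 2 ^ ((i + j) * w) with ht
  rw [foldl_mbrfd_mod, Nat.zero_add]
  have hsum : ((List.range n).flatMap (fun i => (List.range n).map (fun j => t i j % q))).sum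
      = ∑ i ∈ Finset.range n, ∑ j ∈ Finset.range n, t i j % q := by
    rw [List.flatMap, List.sum_flatten, List.map_map]
    rfl
  rw [hsum]
  have h1 : (∑ i ∈ Finset.range n, ∑ j ∈ Finset.range n, t i j % q) % q
      = (∑ i ∈ Finset.range n, ∑ j ∈ Finset.range n, t i j) % q := by
    calc (∑ i ∈ Finset.range n, ∑ j ∈ Finset.range n, t i j % q) % q
        = (∑ i ∈ Finset.range n, (∑ j ∈ Finset.range n, t i j % q) % q) % q :=
          Finset.sum_nat_mod _ _ _
      _ = (∑ i ∈ Finset.range n, (∑ j ∈ Finset.range n, t i j) % q) % q := by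
          congr 1
          exact Finset.sum_congr rfl fun i _ => (Finset.sum_nat_mod _ _ _).symm
      _ = (∑ i ∈ Finset.range n, ∑ j ∈ Finset.range n, t i j) % q :=
          (Finset.sum_nat_mod _ _ _).symm
  rw [h1]
  have h2 : (∑ i ∈ Finset.range n, ∑ j ∈ Finset.range n, t i j) = α * β := by
    have hts : ∀ i j, t i j = ((α / 2 ^ (i * w) % 2 ^ w) * 2 ^ (i * w)) *
        ((β / 2 ^ (j * w) % 2 ^ w) * 2 ^ (j * w)) := by
      intro i j
      simp only [ht]
      rw [add_mul, pow_add]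
      ring
    simp only [hts]
    rw [← Finset.sum_mul_sum, digit_sum, digit_sum]
    have hl : n * w = l := Nat.div_mul_cancel hwl
    rw [hl, Nat.mod_eq_of_lt hα, Nat.mod_eq_of_lt hβ]
  rw [h2]
end

section
/- Let q ≥ 2, k natural with 2q ≤ 2^k, μ = ⌊2^(2k)/q⌋, c < 2^(2k), and r = c - ⌊c·μ/2^(2k)⌋·q the Barrett remainder. Define ρ by: if r ≥ q then ρ = r - q else ρ = r; and then if ρ ≥ q then replace ρ by ρ - q. Then ρ = c mod q. -/
theorem barrett_two_subtractions (q k c : ℕ) (hq : 2 ≤ q) (hqk : 2 * q ≤ 2 ^ k)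
    (hc : c < 2 ^ (2 * k)) :
    (let r := c - ((c * (2 ^ (2 * k) / q)) / 2 ^ (2 * k)) * q;
     let ρ₁ := if q ≤ r then r - q else r;
     if q ≤ ρ₁ then ρ₁ - q else ρ₁) = c % q := by
  have hqpos : 0 < q := by omega
  set N := 2 ^ (2 * k) with hN
  have hNpos : 0 < N := Nat.pow_pos (by norm_num)
  set μ := N / q with hμ
  set m := c * μ / N with hm
  have hμq : μ * q ≤ N := Nat.div_mul_le_self N q
  have hmN : m * N ≤ c * μ := Nat.div_mul_le_self _ _
  have h1 : m ≤ c / q := by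
    rw [Nat.le_div_iff_mul_le hqpos]
    have hchain : m * q * N ≤ c * N := by
      calc m * q * N = m * N * q := by ring
        _ ≤ c * μ * q := by gcongr
        _ = c * (μ * q) := by ring
        _ ≤ c * N := by gcongr
    exact Nat.le_of_mul_le_mul_right hchain hNpos
  have h2 : c / q ≤ m + 1 := by
    have key1 : N ≤ q * μ + (q - 1) := by
      have hd := Nat.div_add_mod N q
      rw [← hμ] at hd
      have hmlt := Nat.mod_lt N hqpos
      omega
    have key2 : c * μ < (m + 1) * N :=
      (Nat.div_lt_iff_lt_mul hNpos).mp (Nat.lt_succ_self m)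
    have hbig : c * N < (m + 2) * q * N := by
      calc c * N ≤ c * (q * μ + (q - 1)) := by gcongr
        _ = c * μ * q + c * (q - 1) := by
            have : q - 1 + 1 = q := by omega
            nlinarith [this]
        _ < (m + 1) * N * q + c * (q - 1) := by gcongr
        _ ≤ (m + 1) * N * q + c * q := by gcongr <;> omega
        _ ≤ (m + 1) * N * q + N * q := by gcongr
        _ = (m + 2) * q * N := by ring
    have hlt : c < (m + 2) * q := Nat.lt_of_mul_lt_mul_right hbig
    have : c / q < m + 2 := by
      rw [Nat.div_lt_iff_lt_mul hqpos]; nlinarith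
    omega
  have hdm : q * (c / q) + c % q = c := Nat.div_add_mod c q
  have hb : c % q < q := Nat.mod_lt _ hqpos
  have hcase : q * (c / q) = m * q ∨ q * (c / q) = m * q + q := by
    rcases (show c / q = m ∨ c / q = m + 1 by omega) with h | h <;>
      rw [h] <;> [left; right] <;> ring
  simp only []
  split_ifs <;> omega
end
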